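/- (Central functions are monic) Let (a,b,c) ∈ ℕ³ be admissible, set α := (−a+b+c)/2, β := (a−b+c)/2, γ := (a+b−c)/2 and δ := (a+b+c)/2, and suppose p is a polynomial in three variables y, x, z over ℂ satisfying χ_{a,b}^c(x₁,x₂) = p(tr(x₂), tr(x₁), tr(x₁x₂⁻¹)) for all x₁, x₂ ∈ SL(2,ℂ). Then p has total degree δ, the coefficient of the monomial y^α x^β z^γ in p equals 1, and every other monomial occurring in p has total degree strictly less than δ. -/

import Mathlib

open Matrix Finset

noncomputable section

abbrev SL2 : Type := Matrix.SpecialLinearGroup (Fin 2) ℂ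

/-- Matrix entry of the representation ρₙ on Vₙ in the basis `n_k = X^k Y^{n-k}`:
`rhoFun n g l k` is the coefficient of `X^l Y^{n-l}` in
`(g₁₁ X + g₂₁ Y)^k (g₁₂ X + g₂₂ Y)^{n-k}`. -/
def rhoFun (n : ℕ) (g : SL2) (l k : ℕ) : ℂ :=
  MvPolynomial.coeff (Finsupp.single (0 : Fin 2) l + Finsupp.single (1 : Fin 2) (n - l))
    (MvPolynomial.aeval
      ![MvPolynomial.C (g.1 0 0) * MvPolynomial.X (0 : Fin 2) +
          MvPolynomial.C (g.1 1 0) * MvPolynomial.X 1,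
        MvPolynomial.C (g.1 0 1) * MvPolynomial.X 0 +
          MvPolynomial.C (g.1 1 1) * MvPolynomial.X 1]
      ((MvPolynomial.X (0 : Fin 2) : MvPolynomial (Fin 2) ℂ) ^ k * MvPolynomial.X 1 ^ (n - k)))

/-- A triple `(a,b,c)` of naturals is admissible: `(−a+b+c)/2, (a−b+c)/2, (a+b−c)/2 ∈ ℕ`. -/
def Admissible (a b c : ℕ) : Prop :=
  a ≤ b + c ∧ b ≤ a + c ∧ c ≤ a + b ∧ (a + b + c) % 2 = 0

instance : ∀ a b c : ℕ, Decidable (Admissible a b c) := fun a b c => by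
  unfold Admissible; infer_instance

/-- The coefficient of `a_p ⊗ b_q` in `ι(c_k)`, where
`ι : V_c → V_a ⊗ V_b` is the Clebsch-Gordan injection
`ι(c_k) = C(c,k)⁻¹ Σ (−1)^m C(β,i) C(α,j) C(γ,m) a_{i+γ−m} ⊗ b_{j+m}`
(with `α = (−a+b+c)/2`, `β = (a−b+c)/2`, `γ = (a+b−c)/2`). -/
def iotaCoeff (a b c k p q : ℕ) : ℂ :=
  ((c.choose k : ℂ))⁻¹ *
    ∑ i ∈ Finset.range ((a + c - b) / 2 + 1),
      ∑ j ∈ Finset.range ((b + c - a) / 2 + 1),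
        ∑ m ∈ Finset.range ((a + b - c) / 2 + 1),
          if i + j = k ∧ p = i + (a + b - c) / 2 - m ∧ q = j + m then
            (-1 : ℂ) ^ m * (((a + c - b) / 2).choose i : ℂ) *
              (((b + c - a) / 2).choose j : ℂ) * (((a + b - c) / 2).choose m : ℂ)
          else 0

/-- `Tcoeff a b c x₁ x₂ k p q` is the coefficient of `a_p ⊗ b_q` in
`(ρ_a(x₁) ⊗ ρ_b(x₂))(ι(c_k))`. -/
def Tcoeff (a b c : ℕ) (x₁ x₂ : SL2) (k p q : ℕ) : ℂ :=
  ∑ p' ∈ Finset.range (a + 1), ∑ q' ∈ Finset.range (b + 1),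
    rhoFun a x₁ p p' * rhoFun b x₂ q q' * iotaCoeff a b c k p' q'

/-- The central function `χ_{a,b}^c : SL(2,ℂ) × SL(2,ℂ) → ℂ`, defined to be `0` when
`(a,b,c)` is not admissible. -/
def centralFn (a b c : ℕ) (x₁ x₂ : SL2) : ℂ :=
  if Admissible a b c then
    ∑ k ∈ Finset.range (c + 1),
      ∑ i ∈ Finset.range ((a + c - b) / 2 + 1),
        ∑ j ∈ Finset.range ((b + c - a) / 2 + 1),
          ∑ m ∈ Finset.range ((a + b - c) / 2 + 1),
            if i + j = k then
              (-1 : ℂ) ^ m * (((a + c - b) / 2).choose i : ℂ) *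
                  (((b + c - a) / 2).choose j : ℂ) * (((a + b - c) / 2).choose m : ℂ) /
                  ((a.choose (i + (a + b - c) / 2 - m) : ℂ) * (b.choose (j + m) : ℂ)) *
                Tcoeff a b c x₁ x₂ k (i + (a + b - c) / 2 - m) (j + m)
            else 0
  else 0

namespace CFM

open MvPolynomial

/-- The matrix `[[s,1],[0,s⁻¹]]` in SL2. -/
def matA (s : ℂ) (hs : s ≠ 0) : SL2 :=
  ⟨!![s, 1; 0, s⁻¹], by simp [Matrix.det_fin_two_of, mul_inv_cancel₀ hs]⟩

/-- The matrix `[[t,0],[u,t⁻¹]]` in SL2. -/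
def matB (t u : ℂ) (ht : t ≠ 0) : SL2 :=
  ⟨!![t, 0; u, t⁻¹], by simp [Matrix.det_fin_two_of, mul_inv_cancel₀ ht]⟩

lemma trace_matA (s : ℂ) (hs : s ≠ 0) :
    Matrix.trace ((matA s hs : SL2) : Matrix (Fin 2) (Fin 2) ℂ) = s + s⁻¹ := by
  simp [matA, Matrix.trace_fin_two]

lemma trace_matB (t u : ℂ) (ht : t ≠ 0) :
    Matrix.trace ((matB t u ht : SL2) : Matrix (Fin 2) (Fin 2) ℂ) = t + t⁻¹ := by
  simp [matB, Matrix.trace_fin_two]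

lemma trace_matAB (s t u : ℂ) (hs : s ≠ 0) (ht : t ≠ 0) :
    Matrix.trace (((matA s hs * (matB t u ht)⁻¹ : SL2)) : Matrix (Fin 2) (Fin 2) ℂ)
      = s * t⁻¹ + t * s⁻¹ - u := by
  have : ((matB t u ht)⁻¹ : SL2).1 = Matrix.adjugate (matB t u ht).1 :=
    Matrix.SpecialLinearGroup.coe_inv _
  rw [Matrix.SpecialLinearGroup.coe_mul, this]
  simp [matA, matB, Matrix.adjugate_fin_two, Matrix.trace_fin_two, Matrix.mul_apply,
    Fin.sum_univ_two]
  ring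

end CFM
namespace CFM
open MvPolynomial

lemma single_add_single_eq (i j l m : ℕ) :
    (Finsupp.single (0:Fin 2) i + Finsupp.single (1:Fin 2) j
      = Finsupp.single (0:Fin 2) l + Finsupp.single (1:Fin 2) m) ↔ (i = l ∧ j = m) := by
  constructor
  · intro hh
    constructor
    · have := DFunLike.congr_fun hh 0
      simpa [Finsupp.single_apply] using this
    · have := DFunLike.congr_fun hh 1
      simpa [Finsupp.single_apply] using this
  · rintro ⟨rfl, rfl⟩; rfl

lemma coeff_helper (z : ℂ) (i j l m : ℕ) :
    MvPolynomial.coeff (Finsupp.single (0:Fin 2) l + Finsupp.single (1:Fin 2) m)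
      (MvPolynomial.C z * MvPolynomial.X (0:Fin 2) ^ i * MvPolynomial.X 1 ^ j :
        MvPolynomial (Fin 2) ℂ)
    = if i = l ∧ j = m then z else 0 := by
  rw [X_pow_eq_monomial, X_pow_eq_monomial, C_mul_monomial, monomial_mul, coeff_monomial]
  simp only [single_add_single_eq, mul_one]

lemma rhoA_eq (n l k : ℕ) (hl : l ≤ n) (s : ℂ) (hs : s ≠ 0) :
    s ^ n * rhoFun n (matA s hs) l k
      = if k ≤ l then (((n - k).choose (l - k) : ℕ) : ℂ) * s ^ (k + l) else 0 := by
  rw [rhoFun, _root_.map_mul, map_pow, map_pow, aeval_X, aeval_X]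
  simp only [Matrix.cons_val', Matrix.cons_val_zero, Matrix.cons_val_one, Matrix.head_cons,
    Matrix.head_fin_const, Matrix.cons_val_fin_one, Matrix.empty_val']
  rw [show (matA s hs).1 0 0 = s from rfl, show (matA s hs).1 1 0 = 0 from rfl,
    show (matA s hs).1 0 1 = 1 from rfl, show (matA s hs).1 1 1 = s⁻¹ from rfl]
  simp only [map_zero, zero_mul, add_zero, _root_.map_one, one_mul]
  rw [add_pow, Finset.mul_sum, coeff_sum]
  have hterm : ∀ r,
      (MvPolynomial.C s * MvPolynomial.X (0:Fin 2)) ^ k *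
        (MvPolynomial.X (0:Fin 2) ^ r * (MvPolynomial.C s⁻¹ * MvPolynomial.X 1) ^ (n - k - r) *
          ((n - k).choose r : MvPolynomial (Fin 2) ℂ))
      = MvPolynomial.C (s ^ k * s⁻¹ ^ (n - k - r) * ((n - k).choose r : ℂ)) *
          MvPolynomial.X (0:Fin 2) ^ (k + r) * MvPolynomial.X 1 ^ (n - k - r) := by
    intro r
    rw [mul_pow, mul_pow, ← C_pow, ← C_pow,
      show ((((n-k).choose r : ℕ)) : MvPolynomial (Fin 2) ℂ)
        = MvPolynomial.C (((n-k).choose r : ℕ) : ℂ) by simp,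
      C_mul, C_mul]
    ring
  simp only [hterm, coeff_helper]
  rw [Finset.mul_sum]
  rcases le_or_gt k l with hkl | hkl
  · rw [Finset.sum_eq_single (l - k)]
    · rw [if_pos ⟨by omega, by omega⟩, if_pos hkl]
      have h1 : s ^ n = s ^ (n - l) * s ^ l := by rw [← pow_add]; congr 1; omega
      have h2 : n - k - (l - k) = n - l := by omega
      rw [h2]
      have h3 : s ^ (n - l) * (s⁻¹) ^ (n - l) = 1 := by
        rw [← mul_pow, mul_inv_cancel₀ hs, one_pow]
      calc s ^ n * (s ^ k * s⁻¹ ^ (n - l) * ((n - k).choose (l - k) : ℂ))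
          = ((n - k).choose (l - k) : ℂ) * s ^ (k + l) *
              (s ^ (n - l) * (s⁻¹) ^ (n - l)) := by
            rw [h1, pow_add]; ring
        _ = ((n - k).choose (l - k) : ℂ) * s ^ (k + l) := by rw [h3, mul_one]
    · intro r _ hr
      rw [if_neg, mul_zero]
      rintro ⟨h1, -⟩; omega
    · intro hmem
      exfalso; apply hmem
      simp only [Finset.mem_range]; omega
  · rw [if_neg (by omega)]
    apply Finset.sum_eq_zero
    intro r _
    rw [if_neg, mul_zero]
    rintro ⟨h1, -⟩; omega

lemma rhoB_eq (n l k : ℕ) (hk : k ≤ n) (hl : l ≤ n) (t u : ℂ) (ht : t ≠ 0) :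
    t ^ n * rhoFun n (matB t u ht) l k
      = if l ≤ k then ((k.choose l : ℕ) : ℂ) * t ^ (l + k) * u ^ (k - l) else 0 := by
  rw [rhoFun, _root_.map_mul, map_pow, map_pow, aeval_X, aeval_X]
  simp only [Matrix.cons_val', Matrix.cons_val_zero, Matrix.cons_val_one, Matrix.head_cons,
    Matrix.head_fin_const, Matrix.cons_val_fin_one, Matrix.empty_val']
  rw [show (matB t u ht).1 0 0 = t from rfl, show (matB t u ht).1 1 0 = u from rfl,
    show (matB t u ht).1 0 1 = 0 from rfl, show (matB t u ht).1 1 1 = t⁻¹ from rfl]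
  simp only [map_zero, zero_mul, zero_add]
  rw [add_pow, Finset.sum_mul, coeff_sum]
  have hterm : ∀ r,
      (MvPolynomial.C t * MvPolynomial.X (0:Fin 2)) ^ r *
          (MvPolynomial.C u * MvPolynomial.X 1) ^ (k - r) * (k.choose r : MvPolynomial (Fin 2) ℂ) *
        (MvPolynomial.C t⁻¹ * MvPolynomial.X 1) ^ (n - k)
      = MvPolynomial.C (t ^ r * u ^ (k - r) * t⁻¹ ^ (n - k) * (k.choose r : ℂ)) *
          MvPolynomial.X (0:Fin 2) ^ r * MvPolynomial.X 1 ^ (k - r + (n - k)) := by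
    intro r
    rw [mul_pow, mul_pow, mul_pow, ← C_pow, ← C_pow, ← C_pow,
      show (((k.choose r : ℕ)) : MvPolynomial (Fin 2) ℂ)
        = MvPolynomial.C (((k.choose r : ℕ)) : ℂ) by simp,
      C_mul, C_mul, C_mul, pow_add]
    ring
  simp only [hterm, coeff_helper]
  rw [Finset.mul_sum]
  rcases le_or_gt l k with hkl | hkl
  · rw [Finset.sum_eq_single l]
    · rw [if_pos ⟨rfl, by omega⟩, if_pos hkl]
      have h1 : t ^ n = t ^ (n - k) * t ^ k := by rw [← pow_add]; congr 1; omega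
      have h3 : t ^ (n - k) * (t⁻¹) ^ (n - k) = 1 := by
        rw [← mul_pow, mul_inv_cancel₀ ht, one_pow]
      calc t ^ n * (t ^ l * u ^ (k - l) * t⁻¹ ^ (n - k) * ((k.choose l : ℕ) : ℂ))
          = ((k.choose l : ℕ) : ℂ) * t ^ (l + k) * u ^ (k - l) *
              (t ^ (n - k) * (t⁻¹) ^ (n - k)) := by
            rw [h1, pow_add]; ring
        _ = _ := by rw [h3, mul_one]
    · intro r _ hr
      rw [if_neg, mul_zero]
      rintro ⟨h1, -⟩; omega
    · intro hmem
      exfalso; apply hmem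
      simp only [Finset.mem_range]; omega
  · rw [if_neg (by omega)]
    apply Finset.sum_eq_zero
    intro r _
    rw [if_neg, mul_zero]
    rintro ⟨h1, h2⟩; omega

end CFM
namespace CFM
open MvPolynomial

def Qrho1 (a l k : ℕ) : MvPolynomial (Fin 3) ℂ :=
  if k ≤ l then MvPolynomial.C (((a - k).choose (l - k) : ℕ) : ℂ) *
    MvPolynomial.X 0 ^ (k + l) else 0

def Qrho2 (l k : ℕ) : MvPolynomial (Fin 3) ℂ :=
  if l ≤ k then MvPolynomial.C ((k.choose l : ℕ) : ℂ) * MvPolynomial.X 1 ^ (l + k) *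
    MvPolynomial.X 2 ^ (k - l) else 0

def QT (a b c k pp qq : ℕ) : MvPolynomial (Fin 3) ℂ :=
  ∑ p' ∈ Finset.range (a+1), ∑ q' ∈ Finset.range (b+1),
    Qrho1 a pp p' * Qrho2 qq q' * MvPolynomial.C (iotaCoeff a b c k p' q')

def Qpoly (a b c : ℕ) : MvPolynomial (Fin 3) ℂ :=
  ∑ k ∈ Finset.range (c+1), ∑ i ∈ Finset.range ((a+c-b)/2+1),
    ∑ j ∈ Finset.range ((b+c-a)/2+1), ∑ m ∈ Finset.range ((a+b-c)/2+1),
      if i + j = k then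
        MvPolynomial.C ((-1:ℂ)^m * (((a+c-b)/2).choose i : ℂ) * (((b+c-a)/2).choose j : ℂ) *
            (((a+b-c)/2).choose m : ℂ) /
            ((a.choose (i+(a+b-c)/2-m) : ℂ) * (b.choose (j+m) : ℂ))) *
          QT a b c k (i+(a+b-c)/2-m) (j+m)
      else 0

lemma eval_QT (a b c k pp qq : ℕ) (hpp : pp ≤ a) (hqq : qq ≤ b) (s t u : ℂ)
    (hs : s ≠ 0) (ht : t ≠ 0) :
    MvPolynomial.eval ![s,t,u] (QT a b c k pp qq)
      = s^a * t^b * Tcoeff a b c (matA s hs) (matB t u ht) k pp qq := by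
  rw [QT, Tcoeff, Finset.mul_sum, map_sum]
  apply Finset.sum_congr rfl
  intro p' hp'
  rw [Finset.mul_sum, map_sum]
  apply Finset.sum_congr rfl
  intro q' hq'
  rw [_root_.map_mul, _root_.map_mul, eval_C]
  have hq2b : q' ≤ b := by have := Finset.mem_range.mp hq'; omega
  have e1 : MvPolynomial.eval ![s,t,u] (Qrho1 a pp p') = s^a * rhoFun a (matA s hs) pp p' := by
    rw [rhoA_eq a pp p' hpp s hs, Qrho1]
    split_ifs
    · rw [_root_.map_mul, eval_C, map_pow, eval_X]
      simp
    · simp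
  have e2 : MvPolynomial.eval ![s,t,u] (Qrho2 qq q') = t^b * rhoFun b (matB t u ht) qq q' := by
    rw [rhoB_eq b qq q' hq2b hqq t u ht, Qrho2]
    split_ifs
    · rw [_root_.map_mul, _root_.map_mul, eval_C, map_pow, map_pow, eval_X, eval_X]
      simp
    · simp
  rw [e1, e2]
  ring

lemma eval_Qpoly (a b c : ℕ) (h : Admissible a b c) (s t u : ℂ) (hs : s ≠ 0) (ht : t ≠ 0) :
    MvPolynomial.eval ![s,t,u] (Qpoly a b c)
      = s^a * t^b * centralFn a b c (matA s hs) (matB t u ht) := by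
  obtain ⟨h1, h2, h3, h4⟩ := h
  rw [centralFn, if_pos ⟨h1, h2, h3, h4⟩, Qpoly, map_sum, Finset.mul_sum]
  apply Finset.sum_congr rfl
  intro k hk
  rw [map_sum, Finset.mul_sum]
  apply Finset.sum_congr rfl
  intro i hi
  rw [map_sum, Finset.mul_sum]
  apply Finset.sum_congr rfl
  intro j hj
  rw [map_sum, Finset.mul_sum]
  apply Finset.sum_congr rfl
  intro m hm
  simp only [Finset.mem_range] at hi hj hm
  split_ifs with hij
  · rw [_root_.map_mul, eval_C,
      eval_QT a b c k _ _ (by omega) (by omega) s t u hs ht]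
    ring
  · simp
end CFM
namespace CFM
open MvPolynomial

lemma single3_eq (i j k l m n : ℕ) :
    (Finsupp.single (0:Fin 3) i + Finsupp.single 1 j + Finsupp.single 2 k
      = Finsupp.single (0:Fin 3) l + Finsupp.single 1 m + Finsupp.single 2 n)
      ↔ (i = l ∧ j = m ∧ k = n) := by
  constructor
  · intro hh
    refine ⟨?_, ?_, ?_⟩
    · have := DFunLike.congr_fun hh 0
      simpa [Finsupp.single_apply] using this
    · have := DFunLike.congr_fun hh 1
      simpa [Finsupp.single_apply] using this
    · have := DFunLike.congr_fun hh 2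
      simpa [Finsupp.single_apply] using this
  · rintro ⟨rfl, rfl, rfl⟩; rfl

lemma mono3 (z : ℂ) (i j k : ℕ) :
    (MvPolynomial.C z * MvPolynomial.X 0 ^ i * MvPolynomial.X 1 ^ j * MvPolynomial.X 2 ^ k :
      MvPolynomial (Fin 3) ℂ)
    = MvPolynomial.monomial
        (Finsupp.single (0:Fin 3) i + Finsupp.single 1 j + Finsupp.single 2 k) z := by
  rw [X_pow_eq_monomial, X_pow_eq_monomial, X_pow_eq_monomial, C_mul_monomial,
    monomial_mul, monomial_mul]
  simp

lemma atom_eq (a pp p' qq q' : ℕ) (io : ℂ) :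
    Qrho1 a pp p' * Qrho2 qq q' * MvPolynomial.C io =
      if p' ≤ pp ∧ qq ≤ q' then
        MvPolynomial.monomial
          (Finsupp.single (0:Fin 3) (p'+pp) + Finsupp.single 1 (qq+q')
            + Finsupp.single 2 (q'-qq))
          ((((a-p').choose (pp-p') : ℕ):ℂ) * ((q'.choose qq : ℕ):ℂ) * io)
      else 0 := by
  rw [Qrho1, Qrho2]
  by_cases h1 : p' ≤ pp
  · by_cases h2 : qq ≤ q'
    · rw [if_pos h1, if_pos h2, if_pos ⟨h1, h2⟩, ← mono3]
      rw [C_mul, C_mul]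
      ring
    · rw [if_pos h1, if_neg h2, if_neg (show ¬(p' ≤ pp ∧ qq ≤ q') from fun hc => h2 hc.2)]
      ring
  · rw [if_neg h1, if_neg (show ¬(p' ≤ pp ∧ qq ≤ q') from fun hc => h1 hc.1)]
    ring

lemma iota_ne (a b c k p' q' : ℕ) (hio : iotaCoeff a b c k p' q' ≠ 0) :
    ∃ i' j' m', i' ≤ (a+c-b)/2 ∧ j' ≤ (b+c-a)/2 ∧ m' ≤ (a+b-c)/2 ∧ i' + j' = k ∧
      p' = i' + (a+b-c)/2 - m' ∧ q' = j' + m' := by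
  rw [iotaCoeff] at hio
  have hsum := right_ne_zero_of_mul hio
  obtain ⟨i', hi', h'⟩ := Finset.exists_ne_zero_of_sum_ne_zero hsum
  obtain ⟨j', hj', h'⟩ := Finset.exists_ne_zero_of_sum_ne_zero h'
  obtain ⟨m', hm', h'⟩ := Finset.exists_ne_zero_of_sum_ne_zero h'
  simp only [Finset.mem_range] at hi' hj' hm'
  by_cases hcond : i' + j' = k ∧ p' = i' + (a+b-c)/2 - m' ∧ q' = j' + m'
  · exact ⟨i', j', m', by omega, by omega, by omega, hcond.1, hcond.2.1, hcond.2.2⟩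
  · rw [if_neg hcond] at h'
    exact absurd rfl h'

lemma sum_delta {M : Type*} [AddCommMonoid M] (n aa : ℕ) (h : aa < n) (f : ℕ → M) :
    (∑ i ∈ Finset.range n, if i = aa then f i else 0) = f aa := by
  rw [Finset.sum_ite_eq' (Finset.range n) aa f]
  rw [if_pos (Finset.mem_range.mpr h)]

lemma sum_delta2 {M : Type*} [AddCommMonoid M] (n1 n2 a1 a2 : ℕ) (h1 : a1 < n1)
    (h2 : a2 < n2) (v : M) (f : ℕ → ℕ → M)
    (hf : ∀ x ∈ Finset.range n1, ∀ y ∈ Finset.range n2,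
      f x y = if y = a2 then (if x = a1 then v else 0) else 0) :
    (∑ x ∈ Finset.range n1, ∑ y ∈ Finset.range n2, f x y) = v := by
  calc ∑ x ∈ Finset.range n1, ∑ y ∈ Finset.range n2, f x y
      = ∑ x ∈ Finset.range n1, (if x = a1 then v else 0) :=
        Finset.sum_congr rfl (fun x hx => by
          rw [Finset.sum_congr rfl (fun y hy => hf x hx y hy)]
          exact sum_delta n2 a2 h2 _)
    _ = v := sum_delta n1 a1 h1 _

lemma sum_delta3 {M : Type*} [AddCommMonoid M] (n1 n2 n3 a1 a2 a3 : ℕ) (h1 : a1 < n1)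
    (h2 : a2 < n2) (h3 : a3 < n3) (v : M) (f : ℕ → ℕ → ℕ → M)
    (hf : ∀ x ∈ Finset.range n1, ∀ y ∈ Finset.range n2, ∀ z ∈ Finset.range n3,
      f x y z = if z = a3 then (if y = a2 then (if x = a1 then v else 0) else 0) else 0) :
    (∑ x ∈ Finset.range n1, ∑ y ∈ Finset.range n2, ∑ z ∈ Finset.range n3, f x y z) = v := by
  calc ∑ x ∈ Finset.range n1, ∑ y ∈ Finset.range n2, ∑ z ∈ Finset.range n3, f x y z
      = ∑ x ∈ Finset.range n1, (if x = a1 then v else 0) :=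
        Finset.sum_congr rfl (fun x hx => by
          exact sum_delta2 n2 n3 a2 a3 h2 h3 _ _ (fun y hy z hz => hf x hx y hy z hz))
    _ = v := sum_delta n1 a1 h1 _

lemma sum_delta4 {M : Type*} [AddCommMonoid M] (n1 n2 n3 n4 a1 a2 a3 a4 : ℕ) (h1 : a1 < n1)
    (h2 : a2 < n2) (h3 : a3 < n3) (h4 : a4 < n4) (v : M) (f : ℕ → ℕ → ℕ → ℕ → M)
    (hf : ∀ x ∈ Finset.range n1, ∀ y ∈ Finset.range n2, ∀ z ∈ Finset.range n3,
        ∀ w ∈ Finset.range n4,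
      f x y z w = if w = a4 then (if z = a3 then (if y = a2 then (if x = a1 then v else 0)
        else 0) else 0) else 0) :
    (∑ x ∈ Finset.range n1, ∑ y ∈ Finset.range n2, ∑ z ∈ Finset.range n3,
      ∑ w ∈ Finset.range n4, f x y z w) = v := by
  calc ∑ x ∈ Finset.range n1, ∑ y ∈ Finset.range n2, ∑ z ∈ Finset.range n3,
        ∑ w ∈ Finset.range n4, f x y z w
      = ∑ x ∈ Finset.range n1, (if x = a1 then v else 0) :=
        Finset.sum_congr rfl (fun x hx => by
          exact sum_delta3 n2 n3 n4 a2 a3 a4 h2 h3 h4 _ _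
            (fun y hy z hz w hw => hf x hx y hy z hz w hw))
    _ = v := sum_delta n1 a1 h1 _

lemma iota_top (a b c : ℕ) (h1 : a ≤ b + c) (h2 : b ≤ a + c) (h3 : c ≤ a + b)
    (h4 : (a+b+c) % 2 = 0) :
    iotaCoeff a b c c ((a+c-b)/2) b = (-1:ℂ)^((a+b-c)/2) := by
  rw [iotaCoeff, Nat.choose_self]
  have key : ∀ i ∈ Finset.range ((a+c-b)/2+1), ∀ j ∈ Finset.range ((b+c-a)/2+1),
      ∀ m ∈ Finset.range ((a+b-c)/2+1),
      (if i + j = c ∧ (a+c-b)/2 = i + (a+b-c)/2 - m ∧ b = j + m then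
        (-1:ℂ)^m * (((a+c-b)/2).choose i : ℂ) * (((b+c-a)/2).choose j : ℂ)
          * (((a+b-c)/2).choose m : ℂ)
      else 0)
      = if m = (a+b-c)/2 then (if j = (b+c-a)/2 then (if i = (a+c-b)/2 then
          (-1:ℂ)^((a+b-c)/2) else 0) else 0) else 0 := by
    intro i hi j hj m hm
    simp only [Finset.mem_range] at hi hj hm
    by_cases hc : i + j = c ∧ (a+c-b)/2 = i + (a+b-c)/2 - m ∧ b = j + m
    · have hpin : i = (a+c-b)/2 ∧ j = (b+c-a)/2 ∧ m = (a+b-c)/2 := by omega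
      obtain ⟨rfl, rfl, rfl⟩ := hpin
      rw [if_pos hc, if_pos rfl, if_pos rfl, if_pos rfl]
      simp [Nat.choose_self]
    · rw [if_neg hc]
      split_ifs with ha hb hcc
      · subst ha; subst hb; subst hcc
        exfalso; apply hc; refine ⟨by omega, by omega, by omega⟩
      all_goals rfl
  rw [sum_delta3 _ _ _ ((a+c-b)/2) ((b+c-a)/2) ((a+b-c)/2) (by omega) (by omega) (by omega)
    _ _ key]
  simp

def topExp (a b c : ℕ) : Fin 3 →₀ ℕ :=
  Finsupp.single (0:Fin 3) (a + (a+c-b)/2) + Finsupp.single 1 (b + (b+c-a)/2)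
    + Finsupp.single 2 ((a+b-c)/2)

lemma topExp_def (a b c : ℕ) : topExp a b c
    = Finsupp.single (0:Fin 3) (a + (a+c-b)/2) + Finsupp.single 1 (b + (b+c-a)/2)
      + Finsupp.single 2 ((a+b-c)/2) := rfl

lemma support_Qpoly (a b c : ℕ) (h1 : a ≤ b + c) (h2 : b ≤ a + c) (h3 : c ≤ a + b)
    (h4 : (a+b+c) % 2 = 0) (q : Fin 3 →₀ ℕ) (hq : q ∈ (Qpoly a b c).support) :
    q 0 + q 1 + q 2 ≤ a + b + (a+b+c)/2 ∧
      (q 0 + q 1 + q 2 = a + b + (a+b+c)/2 → q = topExp a b c) := by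
  rw [MvPolynomial.mem_support_iff, Qpoly] at hq
  simp only [MvPolynomial.coeff_sum] at hq
  obtain ⟨k, hk, hq⟩ := Finset.exists_ne_zero_of_sum_ne_zero hq
  obtain ⟨i, hi, hq⟩ := Finset.exists_ne_zero_of_sum_ne_zero hq
  obtain ⟨j, hj, hq⟩ := Finset.exists_ne_zero_of_sum_ne_zero hq
  obtain ⟨m, hm, hq⟩ := Finset.exists_ne_zero_of_sum_ne_zero hq
  simp only [Finset.mem_range] at hk hi hj hm
  by_cases hij : i + j = k
  swap
  · rw [if_neg hij] at hq; simp at hq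
  rw [if_pos hij, MvPolynomial.coeff_C_mul] at hq
  have hq' := right_ne_zero_of_mul hq
  rw [QT] at hq'
  simp only [MvPolynomial.coeff_sum] at hq'
  obtain ⟨p', hp', hq'⟩ := Finset.exists_ne_zero_of_sum_ne_zero hq'
  obtain ⟨q', hq2, hq'⟩ := Finset.exists_ne_zero_of_sum_ne_zero hq'
  simp only [Finset.mem_range] at hp' hq2
  rw [atom_eq] at hq'
  by_cases hcond : p' ≤ i + (a+b-c)/2 - m ∧ j + m ≤ q'
  swap
  · rw [if_neg hcond] at hq'; simp at hq'
  rw [if_pos hcond, MvPolynomial.coeff_monomial] at hq'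
  by_cases he : (Finsupp.single (0:Fin 3) (p' + (i + (a+b-c)/2 - m))
      + Finsupp.single 1 ((j+m) + q') + Finsupp.single 2 (q' - (j+m))) = q
  swap
  · rw [if_neg he] at hq'; exact absurd rfl hq'
  rw [if_pos he] at hq'
  have hio : iotaCoeff a b c k p' q' ≠ 0 := fun hz => hq' (by rw [hz, mul_zero])
  obtain ⟨i', j', m', hi', hj', hm', hij', hpe, hqe⟩ := iota_ne a b c k p' q' hio
  have c0 : q 0 = p' + (i + (a+b-c)/2 - m) := by
    have := DFunLike.congr_fun he 0
    simpa [Finsupp.single_apply] using this.symm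
  have c1 : q 1 = (j+m) + q' := by
    have := DFunLike.congr_fun he 1
    simpa [Finsupp.single_apply] using this.symm
  have c2 : q 2 = q' - (j+m) := by
    have := DFunLike.congr_fun he 2
    simpa [Finsupp.single_apply] using this.symm
  rw [c0, c1, c2]
  constructor
  · omega
  · intro heq
    rw [← he, topExp_def]
    refine (single3_eq _ _ _ _ _ _).mpr ⟨by omega, by omega, by omega⟩

lemma coeff_top_Qpoly (a b c : ℕ) (h1 : a ≤ b + c) (h2 : b ≤ a + c) (h3 : c ≤ a + b)
    (h4 : (a+b+c) % 2 = 0) :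
    MvPolynomial.coeff (topExp a b c) (Qpoly a b c) = (-1:ℂ)^((a+b-c)/2) := by
  have hbα : ((b.choose ((b+c-a)/2) : ℕ) : ℂ) ≠ 0 :=
    Nat.cast_ne_zero.mpr (Nat.choose_pos (by omega)).ne'
  rw [Qpoly]
  simp only [MvPolynomial.coeff_sum]
  have hQT : MvPolynomial.coeff (topExp a b c)
      (QT a b c c ((a+c-b)/2 + (a+b-c)/2 - 0) ((b+c-a)/2 + 0))
      = ((b.choose ((b+c-a)/2) : ℕ) : ℂ) * (-1:ℂ)^((a+b-c)/2) := by
    rw [QT]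
    simp only [MvPolynomial.coeff_sum]
    have inner : ∀ p' ∈ Finset.range (a+1), ∀ q' ∈ Finset.range (b+1),
        MvPolynomial.coeff (topExp a b c)
          (Qrho1 a ((a+c-b)/2 + (a+b-c)/2 - 0) p' * Qrho2 ((b+c-a)/2 + 0) q'
            * MvPolynomial.C (iotaCoeff a b c c p' q'))
        = if q' = b then (if p' = (a+c-b)/2 then
            ((b.choose ((b+c-a)/2) : ℕ) : ℂ) * (-1:ℂ)^((a+b-c)/2) else 0) else 0 := by
      intro p' hp' q' hq'
      simp only [Finset.mem_range] at hp' hq'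
      rw [atom_eq]
      by_cases hcond : p' ≤ (a+c-b)/2 + (a+b-c)/2 - 0 ∧ (b+c-a)/2 + 0 ≤ q'
      · rw [if_pos hcond, MvPolynomial.coeff_monomial]
        by_cases he : (Finsupp.single (0:Fin 3) (p' + ((a+c-b)/2 + (a+b-c)/2 - 0))
            + Finsupp.single 1 (((b+c-a)/2 + 0) + q') + Finsupp.single 2 (q' - ((b+c-a)/2 + 0)))
            = topExp a b c
        · have hcomp := (single3_eq _ _ _ _ _ _).mp (he.trans (topExp_def a b c))
          have hp'e : p' = (a+c-b)/2 := by omega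
          have hq'e : q' = b := by omega
          rw [if_pos he, if_pos hq'e, if_pos hp'e, hp'e, hq'e]
          rw [show a - (a+c-b)/2 = (a+b-c)/2 from by omega,
            show (a+c-b)/2 + (a+b-c)/2 - 0 - (a+c-b)/2 = (a+b-c)/2 from by omega,
            show (b+c-a)/2 + 0 = (b+c-a)/2 from by omega,
            iota_top a b c h1 h2 h3 h4]
          simp [Nat.choose_self]
        · rw [if_neg he]
          split_ifs with hb1 hb2
          · exfalso; apply he
            subst hb1; subst hb2
            rw [topExp_def]
            refine (single3_eq _ _ _ _ _ _).mpr ⟨by omega, by omega, by omega⟩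
          all_goals rfl
      · rw [if_neg hcond]
        rw [MvPolynomial.coeff_zero]
        split_ifs with hb1 hb2
        · exfalso; apply hcond; subst hb1; subst hb2
          constructor <;> omega
        all_goals rfl
    exact sum_delta2 _ _ ((a+c-b)/2) b (by omega) (by omega) _ _ inner
  have key : ∀ k ∈ Finset.range (c+1), ∀ i ∈ Finset.range ((a+c-b)/2+1),
      ∀ j ∈ Finset.range ((b+c-a)/2+1), ∀ m ∈ Finset.range ((a+b-c)/2+1),
      MvPolynomial.coeff (topExp a b c)
        (if i + j = k then
          MvPolynomial.C ((-1:ℂ)^m * (((a+c-b)/2).choose i : ℂ) * (((b+c-a)/2).choose j : ℂ) *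
              (((a+b-c)/2).choose m : ℂ) /
              ((a.choose (i+(a+b-c)/2-m) : ℂ) * (b.choose (j+m) : ℂ))) *
            QT a b c k (i+(a+b-c)/2-m) (j+m)
        else 0)
      = if m = 0 then (if j = (b+c-a)/2 then (if i = (a+c-b)/2 then (if k = c then
          (-1:ℂ)^((a+b-c)/2) else 0) else 0) else 0) else 0 := by
    intro k hk i hi j hj m hm
    simp only [Finset.mem_range] at hk hi hj hm
    by_cases hcan : m = 0 ∧ j = (b+c-a)/2 ∧ i = (a+c-b)/2 ∧ k = c
    · obtain ⟨hm0, hj0, hi0, hk0⟩ := hcan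
      rw [hm0, hj0, hi0, hk0]
      rw [if_pos (show (a+c-b)/2 + (b+c-a)/2 = c from by omega),
        MvPolynomial.coeff_C_mul, hQT]
      rw [if_pos rfl, if_pos rfl, if_pos rfl, if_pos rfl]
      rw [show (a+c-b)/2+(a+b-c)/2-0 = a from by omega]
      rw [Nat.choose_self, Nat.choose_self, Nat.choose_self, Nat.choose_zero_right]
      rw [show (b+c-a)/2 + 0 = (b+c-a)/2 from by omega]
      field_simp
      norm_num
    · have hrhs : (if m = 0 then (if j = (b+c-a)/2 then (if i = (a+c-b)/2 then (if k = c then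
          (-1:ℂ)^((a+b-c)/2) else 0) else 0) else 0) else 0) = 0 := by
        split_ifs with hb1 hb2 hb3 hb4
        · exact absurd ⟨hb1, hb2, hb3, hb4⟩ hcan
        all_goals rfl
      rw [hrhs]
      by_cases hij : i + j = k
      swap
      · rw [if_neg hij, MvPolynomial.coeff_zero]
      rw [if_pos hij, MvPolynomial.coeff_C_mul]
      have hz : MvPolynomial.coeff (topExp a b c) (QT a b c k (i+(a+b-c)/2-m) (j+m)) = 0 := by
        rw [QT]
        simp only [MvPolynomial.coeff_sum]
        apply Finset.sum_eq_zero
        intro p' hp'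
        apply Finset.sum_eq_zero
        intro q' hq'
        simp only [Finset.mem_range] at hp' hq'
        rw [atom_eq]
        by_cases hcond : p' ≤ i + (a+b-c)/2 - m ∧ j + m ≤ q'
        swap
        · rw [if_neg hcond, MvPolynomial.coeff_zero]
        rw [if_pos hcond, MvPolynomial.coeff_monomial]
        by_cases he : (Finsupp.single (0:Fin 3) (p' + (i + (a+b-c)/2 - m))
            + Finsupp.single 1 ((j+m) + q') + Finsupp.single 2 (q' - (j+m)))
            = topExp a b c
        swap
        · rw [if_neg he]
        rw [if_pos he]
        by_cases hio : iotaCoeff a b c k p' q' = 0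
        · rw [hio, mul_zero]
        exfalso
        obtain ⟨i', j', m', hi', hj', hm', hij', hpe, hqe⟩ := iota_ne a b c k p' q' hio
        have hcomp := (single3_eq _ _ _ _ _ _).mp (he.trans (topExp_def a b c))
        apply hcan
        omega
      rw [hz, mul_zero]
  exact sum_delta4 _ _ _ _ c ((a+c-b)/2) ((b+c-a)/2) 0 (by omega) (by omega) (by omega)
    (by omega) _ _ key

end CFM
namespace CFM
open MvPolynomial

lemma finsupp3_ext (d d' : Fin 3 →₀ ℕ) (h0 : d 0 = d' 0) (h1 : d 1 = d' 1) (h2 : d 2 = d' 2) :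
    d = d' := by
  apply Finsupp.ext
  intro i
  fin_cases i
  · exact h0
  · exact h1
  · exact h2

lemma dsum_eq (d : Fin 3 →₀ ℕ) : (d.sum fun _ e => e) = d 0 + d 1 + d 2 := by
  rw [Finsupp.sum_fintype]
  · exact Fin.sum_univ_three d
  · intro i; rfl

def wPoly : MvPolynomial (Fin 3) ℂ :=
  MvPolynomial.X 0 ^ 2 + MvPolynomial.X 1 ^ 2
    - MvPolynomial.X 0 * MvPolynomial.X 1 * MvPolynomial.X 2

lemma X012_eq : (MvPolynomial.X 0 * MvPolynomial.X 1 * MvPolynomial.X 2 :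
    MvPolynomial (Fin 3) ℂ) = MvPolynomial.monomial
    (Finsupp.single (0:Fin 3) 1 + Finsupp.single 1 1 + Finsupp.single 2 1) 1 := by
  rw [← mono3 1 1 1 1]
  simp

lemma coeff_wPoly (ν : Fin 3 →₀ ℕ) :
    MvPolynomial.coeff ν wPoly
      = (if Finsupp.single (0:Fin 3) 2 = ν then 1 else 0)
        + (if Finsupp.single (1:Fin 3) 2 = ν then 1 else 0)
        - (if (Finsupp.single (0:Fin 3) 1 + Finsupp.single 1 1 + Finsupp.single 2 1) = ν
            then 1 else 0) := by
  rw [wPoly, coeff_sub, coeff_add, coeff_X_pow, coeff_X_pow, X012_eq, coeff_monomial]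

lemma support_w (ν : Fin 3 →₀ ℕ) (hν : ν ∈ wPoly.support) :
    (ν 0 = 2 ∧ ν 1 = 0 ∧ ν 2 = 0) ∨ (ν 0 = 0 ∧ ν 1 = 2 ∧ ν 2 = 0)
      ∨ (ν 0 = 1 ∧ ν 1 = 1 ∧ ν 2 = 1) := by
  rw [MvPolynomial.mem_support_iff] at hν
  by_cases c1 : Finsupp.single (0:Fin 3) 2 = ν
  · left; refine ⟨?_, ?_, ?_⟩ <;> rw [← c1] <;> simp [Finsupp.single_apply]
  by_cases c2 : Finsupp.single (1:Fin 3) 2 = ν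
  · right; left; refine ⟨?_, ?_, ?_⟩ <;> rw [← c2] <;> simp [Finsupp.single_apply]
  by_cases c3 : (Finsupp.single (0:Fin 3) 1 + Finsupp.single 1 1 + Finsupp.single 2 1) = ν
  · right; right; refine ⟨?_, ?_, ?_⟩ <;> rw [← c3] <;> simp [Finsupp.single_apply]
  exfalso
  apply hν
  rw [coeff_wPoly, if_neg c1, if_neg c2, if_neg c3]
  ring

lemma coeff_w_triple :
    MvPolynomial.coeff (Finsupp.single (0:Fin 3) 1 + Finsupp.single 1 1 + Finsupp.single 2 1)
      wPoly = -1 := by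
  rw [coeff_wPoly]
  rw [if_neg (show ¬ _ from fun hcon => by
      have := DFunLike.congr_fun hcon 2; simp [Finsupp.single_apply] at this),
    if_neg (show ¬ _ from fun hcon => by
      have := DFunLike.congr_fun hcon 2; simp [Finsupp.single_apply] at this),
    if_pos rfl]
  ring

lemma support_wPow (n : ℕ) (ν : Fin 3 →₀ ℕ) (hν : ν ∈ (wPoly ^ n).support) :
    ∃ e f g, e + f + g = n ∧ ν 0 = 2*e+g ∧ ν 1 = 2*f+g ∧ ν 2 = g := by
  induction n generalizing ν with
  | zero =>
    rw [pow_zero, MvPolynomial.mem_support_iff] at hν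
    have : (0 : Fin 3 →₀ ℕ) = ν := by
      by_contra hc
      exact hν (by rw [MvPolynomial.coeff_one, if_neg hc])
    exact ⟨0, 0, 0, rfl, by rw [← this]; rfl, by rw [← this]; rfl, by rw [← this]; rfl⟩
  | succ n ih =>
    rw [pow_succ] at hν
    have hsub := MvPolynomial.support_mul _ _ hν
    rw [Finset.mem_add] at hsub
    obtain ⟨x, hx, y, hy, hxy⟩ := hsub
    obtain ⟨e, f, g, hefg, h0, h1, h2⟩ := ih x hx
    have hν0 : ν 0 = x 0 + y 0 := by rw [← hxy]; rfl
    have hν1 : ν 1 = x 1 + y 1 := by rw [← hxy]; rfl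
    have hν2 : ν 2 = x 2 + y 2 := by rw [← hxy]; rfl
    rcases support_w y hy with ⟨k0,k1,k2⟩ | ⟨k0,k1,k2⟩ | ⟨k0,k1,k2⟩
    · exact ⟨e+1, f, g, by omega, by omega, by omega, by omega⟩
    · exact ⟨e, f+1, g, by omega, by omega, by omega, by omega⟩
    · exact ⟨e, f, g+1, by omega, by omega, by omega, by omega⟩

lemma coeff_wPow_diag (n : ℕ) :
    MvPolynomial.coeff
      (Finsupp.single (0:Fin 3) n + Finsupp.single 1 n + Finsupp.single 2 n) (wPoly ^ n)
      = (-1:ℂ)^n := by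
  induction n with
  | zero => simp
  | succ n ih =>
    rw [pow_succ, MvPolynomial.coeff_mul]
    rw [Finset.sum_eq_single_of_mem
      ((Finsupp.single (0:Fin 3) n + Finsupp.single 1 n + Finsupp.single 2 n,
        Finsupp.single (0:Fin 3) 1 + Finsupp.single 1 1 + Finsupp.single 2 1) :
        (Fin 3 →₀ ℕ) × (Fin 3 →₀ ℕ))]
    · rw [ih, coeff_w_triple]; ring
    · rw [_root_.Finset.HasAntidiagonal.mem_antidiagonal]
      apply finsupp3_ext <;> simp [Finsupp.single_apply]
    · intro pair hpair hne
      by_contra hno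
      have hxne := left_ne_zero_of_mul hno
      have hyne := right_ne_zero_of_mul hno
      rw [_root_.Finset.HasAntidiagonal.mem_antidiagonal] at hpair
      obtain ⟨e, f, g, hefg, h0, h1, h2⟩ :=
        support_wPow n pair.1 (MvPolynomial.mem_support_iff.mpr hxne)
      have hs0 : pair.1 0 + pair.2 0 = n + 1 := by
        rw [show pair.1 0 + pair.2 0 = (pair.1 + pair.2) 0 from rfl, hpair]
        simp [Finsupp.single_apply]
      have hs1 : pair.1 1 + pair.2 1 = n + 1 := by
        rw [show pair.1 1 + pair.2 1 = (pair.1 + pair.2) 1 from rfl, hpair]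
        simp [Finsupp.single_apply]
      have hs2 : pair.1 2 + pair.2 2 = n + 1 := by
        rw [show pair.1 2 + pair.2 2 = (pair.1 + pair.2) 2 from rfl, hpair]
        simp [Finsupp.single_apply]
      rcases support_w pair.2 (MvPolynomial.mem_support_iff.mpr hyne) with
        ⟨k0,k1,k2⟩ | ⟨k0,k1,k2⟩ | ⟨k0,k1,k2⟩
      · omega
      · omega
      · apply hne
        have hg : g = n := by omega
        have hx : pair.1 = Finsupp.single (0:Fin 3) n + Finsupp.single 1 n
            + Finsupp.single 2 n := by
          apply finsupp3_ext <;> simp [Finsupp.single_apply] <;> try omega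
        have hy : pair.2 = Finsupp.single (0:Fin 3) 1 + Finsupp.single 1 1
            + Finsupp.single 2 1 := by
          apply finsupp3_ext <;> simp [Finsupp.single_apply] <;> try omega
        exact Prod.ext hx hy

lemma support_sq1 (i : Fin 3) (ν : Fin 3 →₀ ℕ)
    (hν : ν ∈ (MvPolynomial.X i ^ 2 + 1 : MvPolynomial (Fin 3) ℂ).support) :
    ν = Finsupp.single i 2 ∨ ν = 0 := by
  rw [MvPolynomial.mem_support_iff] at hν
  by_cases c1 : Finsupp.single i 2 = ν
  · left; exact c1.symm
  by_cases c2 : (0 : Fin 3 →₀ ℕ) = ν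
  · right; exact c2.symm
  exfalso
  apply hν
  rw [coeff_add, coeff_X_pow, MvPolynomial.coeff_one, if_neg c1, if_neg c2, add_zero]

lemma support_sq1_pow (i : Fin 3) (n : ℕ) (ν : Fin 3 →₀ ℕ)
    (hν : ν ∈ ((MvPolynomial.X i ^ 2 + 1 : MvPolynomial (Fin 3) ℂ) ^ n).support) :
    ∃ e ≤ n, ν = Finsupp.single i (2*e) := by
  induction n generalizing ν with
  | zero =>
    rw [pow_zero, MvPolynomial.mem_support_iff] at hν
    have : (0 : Fin 3 →₀ ℕ) = ν := by
      by_contra hc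
      exact hν (by rw [MvPolynomial.coeff_one, if_neg hc])
    exact ⟨0, by omega, by rw [← this]; simp⟩
  | succ n ih =>
    rw [pow_succ] at hν
    have hsub := MvPolynomial.support_mul _ _ hν
    rw [Finset.mem_add] at hsub
    obtain ⟨x, hx, y, hy, hxy⟩ := hsub
    obtain ⟨e, he, hxe⟩ := ih x hx
    rcases support_sq1 i y hy with hy2 | hy2
    · refine ⟨e+1, by omega, ?_⟩
      rw [← hxy, hxe, hy2, ← Finsupp.single_add]
      congr 1 <;> omega
    · exact ⟨e, by omega, by rw [← hxy, hxe, hy2, add_zero]⟩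

lemma coeff_sq1_pow (i : Fin 3) (n e : ℕ) :
    MvPolynomial.coeff (Finsupp.single i (2*e))
      ((MvPolynomial.X i ^ 2 + 1 : MvPolynomial (Fin 3) ℂ) ^ n) = (n.choose e : ℂ) := by
  rw [add_pow]
  simp only [one_pow, mul_one]
  rw [coeff_sum]
  have key : ∀ k ∈ Finset.range (n+1),
      MvPolynomial.coeff (Finsupp.single i (2*e))
        ((MvPolynomial.X i ^2)^k * (n.choose k : MvPolynomial (Fin 3) ℂ))
      = if k = e then ((n.choose k : ℕ) : ℂ) else 0 := by
    intro k hk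
    rw [show (MvPolynomial.X i ^2)^k * ((n.choose k : ℕ) : MvPolynomial (Fin 3) ℂ)
        = MvPolynomial.C ((n.choose k : ℕ) : ℂ) * MvPolynomial.X i ^ (2*k) from by
        rw [← pow_mul, show ((n.choose k : ℕ) : MvPolynomial (Fin 3) ℂ)
          = MvPolynomial.C ((n.choose k : ℕ) : ℂ) from by simp]
        ring,
      coeff_C_mul, coeff_X_pow]
    by_cases hA : Finsupp.single i (2*k) = Finsupp.single i (2*e)
    · have : k = e := by
        have := DFunLike.congr_fun hA i
        simp [Finsupp.single_apply] at this
        omega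
      rw [if_pos hA, if_pos this, mul_one]
    · have : ¬ (k = e) := fun hc => hA (by rw [hc])
      rw [if_neg hA, if_neg this, mul_zero]
  rw [Finset.sum_congr rfl key]
  by_cases he : e ≤ n
  · exact sum_delta (n+1) e (Nat.lt_succ_of_le he) _
  · have hz : ∀ k ∈ Finset.range (n+1), (if k = e then ((n.choose k:ℕ):ℂ) else 0) = 0 := by
      intro k hk
      simp only [Finset.mem_range] at hk
      rw [if_neg (by omega)]
    rw [Finset.sum_eq_zero hz, Nat.choose_eq_zero_of_lt (by omega)]
    simp

end CFM
namespace CFM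
open MvPolynomial

def Lterm (N : ℕ) (p : MvPolynomial (Fin 3) ℂ) (d : Fin 3 →₀ ℕ) : MvPolynomial (Fin 3) ℂ :=
  MvPolynomial.monomial
      (Finsupp.single (0:Fin 3) (N - d 1 - d 2) + Finsupp.single 1 (N - d 0 - d 2))
      (MvPolynomial.coeff d p) *
    (MvPolynomial.X 1 ^ 2 + 1) ^ (d 0) * (MvPolynomial.X 0 ^ 2 + 1) ^ (d 1) * wPoly ^ (d 2)

lemma support_mono_mem {s y : Fin 3 →₀ ℕ} {cd : ℂ}
    (hy : y ∈ (MvPolynomial.monomial s cd).support) : y = s := by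
  have hcy := MvPolynomial.mem_support_iff.mp hy
  rw [coeff_monomial] at hcy
  by_cases hsy : s = y
  · exact hsy.symm
  · rw [if_neg hsy] at hcy; exact absurd rfl hcy

lemma support_MG1 (N : ℕ) (p : MvPolynomial (Fin 3) ℂ) (d : Fin 3 →₀ ℕ) (x : Fin 3 →₀ ℕ)
    (hx : x ∈ (MvPolynomial.monomial
      (Finsupp.single (0:Fin 3) (N - d 1 - d 2) + Finsupp.single 1 (N - d 0 - d 2))
      (MvPolynomial.coeff d p) * (MvPolynomial.X 1 ^ 2 + 1) ^ (d 0)).support) :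
    ∃ f1 ≤ d 0, x 0 = N - d 1 - d 2 ∧ x 1 = (N - d 0 - d 2) + 2*f1 ∧ x 2 = 0 := by
  have hsub := MvPolynomial.support_mul _ _ hx
  rw [Finset.mem_add] at hsub
  obtain ⟨y, hy, z, hz, hyz⟩ := hsub
  have hymem := support_mono_mem hy
  obtain ⟨f1, hf1, hze⟩ := support_sq1_pow 1 (d 0) z hz
  refine ⟨f1, hf1, ?_, ?_, ?_⟩ <;> rw [← hyz] <;>
    rw [show ∀ (i : Fin 3), (y + z) i = y i + z i from fun i => rfl] <;>
    rw [hymem, hze] <;> simp [Finsupp.single_apply]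

lemma support_MG12 (N : ℕ) (p : MvPolynomial (Fin 3) ℂ) (d : Fin 3 →₀ ℕ) (x : Fin 3 →₀ ℕ)
    (hx : x ∈ (MvPolynomial.monomial
      (Finsupp.single (0:Fin 3) (N - d 1 - d 2) + Finsupp.single 1 (N - d 0 - d 2))
      (MvPolynomial.coeff d p) * (MvPolynomial.X 1 ^ 2 + 1) ^ (d 0)
      * (MvPolynomial.X 0 ^ 2 + 1) ^ (d 1)).support) :
    ∃ f1 ≤ d 0, ∃ e1 ≤ d 1, x 0 = (N - d 1 - d 2) + 2*e1 ∧ x 1 = (N - d 0 - d 2) + 2*f1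
      ∧ x 2 = 0 := by
  have hsub := MvPolynomial.support_mul _ _ hx
  rw [Finset.mem_add] at hsub
  obtain ⟨y, hy, z, hz, hyz⟩ := hsub
  obtain ⟨f1, hf1, hy0, hy1, hy2⟩ := support_MG1 N p d y hy
  obtain ⟨e1, he1, hze⟩ := support_sq1_pow 0 (d 1) z hz
  refine ⟨f1, hf1, e1, he1, ?_, ?_, ?_⟩ <;> rw [← hyz] <;>
    rw [show ∀ (i : Fin 3), (y + z) i = y i + z i from fun i => rfl] <;>
    rw [hze] <;> simp [Finsupp.single_apply, hy0, hy1, hy2]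

lemma coeff_Lterm_shape (N : ℕ) (p : MvPolynomial (Fin 3) ℂ) (d d' : Fin 3 →₀ ℕ)
    (hN0 : d' 0 + d' 2 ≤ N) (hN1 : d' 1 + d' 2 ≤ N)
    (hne : MvPolynomial.coeff
      (Finsupp.single (0:Fin 3) (N + d 1) + Finsupp.single 1 (N + d 0)
        + Finsupp.single 2 (d 2)) (Lterm N p d') ≠ 0) :
    d' = d ∨ d 0 + d 1 + d 2 < d' 0 + d' 1 + d' 2 := by
  have hx := MvPolynomial.mem_support_iff.mpr hne
  rw [Lterm] at hx
  have hsub := MvPolynomial.support_mul _ _ hx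
  rw [Finset.mem_add] at hsub
  obtain ⟨y, hy, z, hz, hyz⟩ := hsub
  obtain ⟨f1, hf1, e1, he1, hy0, hy1, hy2⟩ := support_MG12 N p d' y hy
  obtain ⟨e, f, g, hefg, hz0, hz1, hz2⟩ := support_wPow (d' 2) z hz
  have hm0 : y 0 + z 0 = N + d 1 := by
    rw [show y 0 + z 0 = (y + z) 0 from rfl, hyz]; simp [Finsupp.single_apply]
  have hm1 : y 1 + z 1 = N + d 0 := by
    rw [show y 1 + z 1 = (y + z) 1 from rfl, hyz]; simp [Finsupp.single_apply]
  have hm2 : y 2 + z 2 = d 2 := by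
    rw [show y 2 + z 2 = (y + z) 2 from rfl, hyz]; simp [Finsupp.single_apply]
  by_cases hlt : d 0 + d 1 + d 2 < d' 0 + d' 1 + d' 2
  · right; exact hlt
  · left
    apply finsupp3_ext <;> omega

lemma coeff_Lterm_self (N : ℕ) (p : MvPolynomial (Fin 3) ℂ) (d : Fin 3 →₀ ℕ)
    (h0 : d 0 + d 2 ≤ N) (h1 : d 1 + d 2 ≤ N) :
    MvPolynomial.coeff
      (Finsupp.single (0:Fin 3) (N + d 1) + Finsupp.single 1 (N + d 0)
        + Finsupp.single 2 (d 2)) (Lterm N p d)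
    = (-1:ℂ)^(d 2) * MvPolynomial.coeff d p := by
  rw [Lterm, MvPolynomial.coeff_mul]
  rw [Finset.sum_eq_single_of_mem
    ((Finsupp.single (0:Fin 3) (N + d 1 - d 2) + Finsupp.single 1 (N + d 0 - d 2),
      Finsupp.single (0:Fin 3) (d 2) + Finsupp.single 1 (d 2) + Finsupp.single 2 (d 2)) :
      (Fin 3 →₀ ℕ) × (Fin 3 →₀ ℕ))]
  · rw [coeff_wPow_diag]
    have hfst : MvPolynomial.coeff
        (Finsupp.single (0:Fin 3) (N + d 1 - d 2) + Finsupp.single 1 (N + d 0 - d 2))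
        (MvPolynomial.monomial
          (Finsupp.single (0:Fin 3) (N - d 1 - d 2) + Finsupp.single 1 (N - d 0 - d 2))
          (MvPolynomial.coeff d p) * (MvPolynomial.X 1 ^ 2 + 1) ^ (d 0)
          * (MvPolynomial.X 0 ^ 2 + 1) ^ (d 1)) = MvPolynomial.coeff d p := by
      rw [MvPolynomial.coeff_mul]
      rw [Finset.sum_eq_single_of_mem
        ((Finsupp.single (0:Fin 3) (N - d 1 - d 2) + Finsupp.single 1 (N + d 0 - d 2),
          Finsupp.single (0:Fin 3) (2 * d 1)) : (Fin 3 →₀ ℕ) × (Fin 3 →₀ ℕ))]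
      · rw [coeff_sq1_pow 0 (d 1) (d 1), Nat.choose_self]
        have hre : (Finsupp.single (0:Fin 3) (N - d 1 - d 2) + Finsupp.single 1 (N + d 0 - d 2))
            = (Finsupp.single (0:Fin 3) (N - d 1 - d 2) + Finsupp.single 1 (N - d 0 - d 2))
              + Finsupp.single 1 (2 * d 0) := by
          apply finsupp3_ext <;> simp [Finsupp.single_apply] <;> omega
        rw [hre, coeff_monomial_mul, coeff_sq1_pow 1 (d 0) (d 0), Nat.choose_self]
        simp
      · rw [_root_.Finset.HasAntidiagonal.mem_antidiagonal]
        apply finsupp3_ext <;> simp [Finsupp.single_apply] <;> omega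
      · intro pair hpair hne
        by_contra hno
        have hxne := left_ne_zero_of_mul hno
        have hyne := right_ne_zero_of_mul hno
        rw [_root_.Finset.HasAntidiagonal.mem_antidiagonal] at hpair
        obtain ⟨f1, hf1, hp0, hp1, hp2⟩ :=
          support_MG1 N p d pair.1 (MvPolynomial.mem_support_iff.mpr hxne)
        obtain ⟨e1, he1, hye⟩ := support_sq1_pow 0 (d 1) pair.2
          (MvPolynomial.mem_support_iff.mpr hyne)
        have hs0 : pair.1 0 + pair.2 0 = N + d 1 - d 2 := by
          rw [show pair.1 0 + pair.2 0 = (pair.1 + pair.2) 0 from rfl, hpair]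
          simp [Finsupp.single_apply]
        have hs1 : pair.1 1 + pair.2 1 = N + d 0 - d 2 := by
          rw [show pair.1 1 + pair.2 1 = (pair.1 + pair.2) 1 from rfl, hpair]
          simp [Finsupp.single_apply]
        have hy0 : pair.2 0 = 2 * e1 := by rw [hye]; simp
        have hy1 : pair.2 1 = 0 := by rw [hye]; simp [Finsupp.single_apply]
        apply hne
        have he1d : e1 = d 1 := by omega
        have hx' : pair.1 = Finsupp.single (0:Fin 3) (N - d 1 - d 2)
            + Finsupp.single 1 (N + d 0 - d 2) := by
          apply finsupp3_ext <;> simp [Finsupp.single_apply] <;> omega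
        have hy' : pair.2 = Finsupp.single (0:Fin 3) (2 * d 1) := by
          rw [hye, he1d]
        exact Prod.ext hx' hy'
    rw [hfst]
    ring
  · rw [_root_.Finset.HasAntidiagonal.mem_antidiagonal]
    apply finsupp3_ext <;> simp [Finsupp.single_apply] <;> omega
  · intro pair hpair hne
    by_contra hno
    have hxne := left_ne_zero_of_mul hno
    have hyne := right_ne_zero_of_mul hno
    rw [_root_.Finset.HasAntidiagonal.mem_antidiagonal] at hpair
    obtain ⟨f1, hf1, e1, he1, hp0, hp1, hp2⟩ :=
      support_MG12 N p d pair.1 (MvPolynomial.mem_support_iff.mpr hxne)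
    obtain ⟨e, f, g, hefg, hz0, hz1, hz2⟩ :=
      support_wPow (d 2) pair.2 (MvPolynomial.mem_support_iff.mpr hyne)
    have hs0 : pair.1 0 + pair.2 0 = N + d 1 := by
      rw [show pair.1 0 + pair.2 0 = (pair.1 + pair.2) 0 from rfl, hpair]
      simp [Finsupp.single_apply]
    have hs1 : pair.1 1 + pair.2 1 = N + d 0 := by
      rw [show pair.1 1 + pair.2 1 = (pair.1 + pair.2) 1 from rfl, hpair]
      simp [Finsupp.single_apply]
    have hs2 : pair.1 2 + pair.2 2 = d 2 := by
      rw [show pair.1 2 + pair.2 2 = (pair.1 + pair.2) 2 from rfl, hpair]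
      simp [Finsupp.single_apply]
    apply hne
    have hx' : pair.1 = Finsupp.single (0:Fin 3) (N + d 1 - d 2)
        + Finsupp.single 1 (N + d 0 - d 2) := by
      apply finsupp3_ext <;> simp [Finsupp.single_apply] <;> omega
    have hy' : pair.2 = Finsupp.single (0:Fin 3) (d 2) + Finsupp.single 1 (d 2)
        + Finsupp.single 2 (d 2) := by
      apply finsupp3_ext <;> simp [Finsupp.single_apply] <;> omega
    exact Prod.ext hx' hy'

end CFM
namespace CFM
open MvPolynomial

lemma eval_Lterm (N : ℕ) (p : MvPolynomial (Fin 3) ℂ) (d : Fin 3 →₀ ℕ) (x : Fin 3 → ℂ) :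
    MvPolynomial.eval x (Lterm N p d)
      = MvPolynomial.coeff d p * (x 0)^(N - d 1 - d 2) * (x 1)^(N - d 0 - d 2)
        * ((x 1)^2+1)^(d 0) * ((x 0)^2+1)^(d 1)
        * ((x 0)^2 + (x 1)^2 - x 0 * x 1 * x 2)^(d 2) := by
  have hmono : MvPolynomial.monomial
      (Finsupp.single (0:Fin 3) (N - d 1 - d 2) + Finsupp.single 1 (N - d 0 - d 2))
      (MvPolynomial.coeff d p)
      = MvPolynomial.C (MvPolynomial.coeff d p) * MvPolynomial.X 0 ^ (N - d 1 - d 2)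
        * MvPolynomial.X 1 ^ (N - d 0 - d 2) := by
    rw [show (Finsupp.single (0:Fin 3) (N - d 1 - d 2) + Finsupp.single 1 (N - d 0 - d 2))
        = Finsupp.single (0:Fin 3) (N - d 1 - d 2) + Finsupp.single 1 (N - d 0 - d 2)
          + Finsupp.single 2 0 from by rw [Finsupp.single_zero, add_zero]]
    rw [← mono3, pow_zero, mul_one]
  rw [Lterm, wPoly, hmono]
  simp only [_root_.map_mul, map_pow, map_add, map_sub, _root_.map_one, eval_X, eval_C]
  try ring

lemma perterm (s t u : ℂ) (hs : s ≠ 0) (ht : t ≠ 0) (cd : ℂ) (d0 d1 d2 N : ℕ)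
    (hN0 : d0 + d2 ≤ N) (hN1 : d1 + d2 ≤ N) :
    cd * s^(N - d1 - d2) * t^(N - d0 - d2) * (t^2+1)^d0 * (s^2+1)^d1
        * (s^2 + t^2 - s*t*u)^d2
      = s^N * t^N * (cd * ((t+t⁻¹)^d0 * (s+s⁻¹)^d1 * (s*t⁻¹+t*s⁻¹-u)^d2)) := by
  have e1 : s^2+1 = s*(s+s⁻¹) := by field_simp
  have e2 : t^2+1 = t*(t+t⁻¹) := by field_simp
  have e3 : s^2+t^2-s*t*u = (s*t)*(s*t⁻¹+t*s⁻¹-u) := by field_simp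
  rw [e1, e2, e3,
    show s^N = s^(N-d1-d2) * s^d1 * s^d2 from by
      rw [← pow_add, ← pow_add]; congr 1; omega,
    show t^N = t^(N-d0-d2) * t^d0 * t^d2 from by
      rw [← pow_add, ← pow_add]; congr 1; omega]
  rw [mul_pow s (s+s⁻¹), mul_pow t (t+t⁻¹), mul_pow (s*t) _]
  ring

def Lpoly (N : ℕ) (p : MvPolynomial (Fin 3) ℂ) : MvPolynomial (Fin 3) ℂ :=
  ∑ d ∈ p.support, Lterm N p d

lemma L_eq (a b c : ℕ) (h1 : a ≤ b + c) (h2 : b ≤ a + c) (h3 : c ≤ a + b)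
    (h4 : (a+b+c) % 2 = 0) (p : MvPolynomial (Fin 3) ℂ)
    (hp : ∀ x₁ x₂ : SL2, centralFn a b c x₁ x₂ =
      MvPolynomial.eval
        ![Matrix.trace (x₂ : Matrix (Fin 2) (Fin 2) ℂ),
          Matrix.trace (x₁ : Matrix (Fin 2) (Fin 2) ℂ),
          Matrix.trace ((x₁ * x₂⁻¹ : SL2) : Matrix (Fin 2) (Fin 2) ℂ)] p)
    (N : ℕ) (hN : 2 * p.totalDegree + a + b < N) :
    Lpoly N p = MvPolynomial.X 0 ^ (N-a) * MvPolynomial.X 1 ^ (N-b) * Qpoly a b c := by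
  apply MvPolynomial.funext
  intro x
  rw [Lpoly, map_sum, _root_.map_mul, _root_.map_mul, map_pow, map_pow, eval_X, eval_X]
  by_cases hs : x 0 = 0
  · have hzero : ∀ d ∈ p.support, MvPolynomial.eval x (Lterm N p d) = 0 := by
      intro d hd
      have hd' : d 0 + d 1 + d 2 ≤ p.totalDegree := by
        rw [← dsum_eq]; exact MvPolynomial.le_totalDegree hd
      rw [eval_Lterm, hs, zero_pow (show N - d 1 - d 2 ≠ 0 from by omega)]
      ring
    rw [Finset.sum_eq_zero hzero, hs, zero_pow (show N - a ≠ 0 from by omega)]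
    ring
  by_cases ht : x 1 = 0
  · have hzero : ∀ d ∈ p.support, MvPolynomial.eval x (Lterm N p d) = 0 := by
      intro d hd
      have hd' : d 0 + d 1 + d 2 ≤ p.totalDegree := by
        rw [← dsum_eq]; exact MvPolynomial.le_totalDegree hd
      rw [eval_Lterm, ht, zero_pow (show N - d 0 - d 2 ≠ 0 from by omega)]
      ring
    rw [Finset.sum_eq_zero hzero, ht, zero_pow (show N - b ≠ 0 from by omega)]
    ring
  · have hxv : ![x 0, x 1, x 2] = x := by
      funext i; fin_cases i <;> rfl
    have hQ : MvPolynomial.eval x (Qpoly a b c) = (x 0)^a * (x 1)^b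
        * centralFn a b c (matA (x 0) hs) (matB (x 1) (x 2) ht) := by
      have hev := eval_Qpoly a b c ⟨h1,h2,h3,h4⟩ (x 0) (x 1) (x 2) hs ht
      rw [hxv] at hev
      exact hev
    rw [hQ, hp, trace_matA, trace_matB, trace_matAB]
    have main : ∑ d ∈ p.support, MvPolynomial.eval x (Lterm N p d)
        = (x 0)^N * (x 1)^N * MvPolynomial.eval
            ![x 1 + (x 1)⁻¹, x 0 + (x 0)⁻¹, x 0 * (x 1)⁻¹ + x 1 * (x 0)⁻¹ - x 2] p := by
      rw [MvPolynomial.eval_eq', Finset.mul_sum]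
      apply Finset.sum_congr rfl
      intro d hd
      have hd' : d 0 + d 1 + d 2 ≤ p.totalDegree := by
        rw [← dsum_eq]; exact MvPolynomial.le_totalDegree hd
      rw [eval_Lterm, Fin.prod_univ_three]
      simp only [Matrix.cons_val', Matrix.cons_val_zero, Matrix.cons_val_one, Matrix.head_cons,
        Matrix.cons_val_two, Matrix.tail_cons,
        Matrix.head_fin_const, Matrix.cons_val_fin_one, Matrix.empty_val']
      rw [perterm (x 0) (x 1) (x 2) hs ht (MvPolynomial.coeff d p) (d 0) (d 1) (d 2) N
        (by omega) (by omega)]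
      try ring
    rw [main]
    rw [show (x 0)^N = (x 0)^(N-a) * (x 0)^a from by rw [← pow_add]; congr 1; omega,
      show (x 1)^N = (x 1)^(N-b) * (x 1)^b from by rw [← pow_add]; congr 1; omega]
    ring

end CFM

open CFM

/-- Central functions are monic: if `χ_{a,b}^c = p(tr(x₂), tr(x₁), tr(x₁x₂⁻¹))` with
`(a,b,c)` admissible, then `p` has total degree `δ = (a+b+c)/2`, the monomial
`y^α x^β z^γ` (with `α = (−a+b+c)/2`, `β = (a−b+c)/2`, `γ = (a+b−c)/2`) has
coefficient `1`, and every other monomial of `p` has total degree `< δ`. -/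
theorem centralFn_monic (a b c : ℕ) (h : Admissible a b c) (p : MvPolynomial (Fin 3) ℂ)
    (hp : ∀ x₁ x₂ : SL2, centralFn a b c x₁ x₂ =
      MvPolynomial.eval
        ![Matrix.trace (x₂ : Matrix (Fin 2) (Fin 2) ℂ),
          Matrix.trace (x₁ : Matrix (Fin 2) (Fin 2) ℂ),
          Matrix.trace ((x₁ * x₂⁻¹ : SL2) : Matrix (Fin 2) (Fin 2) ℂ)] p) :
    p.totalDegree = (a + b + c) / 2 ∧
    MvPolynomial.coeff
      (Finsupp.single (0 : Fin 3) ((b + c - a) / 2) +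
        Finsupp.single (1 : Fin 3) ((a + c - b) / 2) +
        Finsupp.single (2 : Fin 3) ((a + b - c) / 2)) p = 1 ∧
    ∀ d ∈ p.support,
      d ≠ (Finsupp.single (0 : Fin 3) ((b + c - a) / 2) +
            Finsupp.single (1 : Fin 3) ((a + c - b) / 2) +
            Finsupp.single (2 : Fin 3) ((a + b - c) / 2)) →
        (d.sum fun _ e => e) < (a + b + c) / 2 := by
  obtain ⟨h1, h2, h3, h4⟩ := h
  set dstar : Fin 3 →₀ ℕ := Finsupp.single (0 : Fin 3) ((b + c - a) / 2) +
      Finsupp.single (1 : Fin 3) ((a + c - b) / 2) +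
      Finsupp.single (2 : Fin 3) ((a + b - c) / 2) with hdstar
  have hds0 : dstar 0 = (b + c - a) / 2 := by rw [hdstar]; simp [Finsupp.single_apply]
  have hds1 : dstar 1 = (a + c - b) / 2 := by rw [hdstar]; simp [Finsupp.single_apply]
  have hds2 : dstar 2 = (a + b - c) / 2 := by rw [hdstar]; simp [Finsupp.single_apply]
  set N : ℕ := 2 * p.totalDegree + a + b + 1 with hNdef
  have hN : 2 * p.totalDegree + a + b < N := by omega
  have hLR := CFM.L_eq a b c h1 h2 h3 h4 p hp N hN
  have hbound : ∀ d' ∈ p.support, d' 0 + d' 1 + d' 2 ≤ p.totalDegree := by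
    intro d' hd'
    rw [← dsum_eq]
    exact MvPolynomial.le_totalDegree hd'
  -- transfer of coefficients
  have hcoeff : ∀ d : Fin 3 →₀ ℕ,
      MvPolynomial.coeff (Finsupp.single (0:Fin 3) (N + d 1) + Finsupp.single 1 (N + d 0)
        + Finsupp.single 2 (d 2)) (CFM.Lpoly N p)
      = MvPolynomial.coeff (Finsupp.single (0:Fin 3) (a + d 1) + Finsupp.single 1 (b + d 0)
        + Finsupp.single 2 (d 2)) (CFM.Qpoly a b c) := by
    intro d
    rw [hLR]
    rw [show (MvPolynomial.X 0 ^ (N-a) * MvPolynomial.X 1 ^ (N-b) : MvPolynomial (Fin 3) ℂ)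
        = MvPolynomial.monomial (Finsupp.single (0:Fin 3) (N-a) + Finsupp.single 1 (N-b)) 1
        from by rw [MvPolynomial.X_pow_eq_monomial, MvPolynomial.X_pow_eq_monomial,
          MvPolynomial.monomial_mul, one_mul]]
    rw [show (Finsupp.single (0:Fin 3) (N + d 1) + Finsupp.single 1 (N + d 0)
        + Finsupp.single 2 (d 2))
        = (Finsupp.single (0:Fin 3) (N-a) + Finsupp.single 1 (N-b))
          + (Finsupp.single (0:Fin 3) (a + d 1) + Finsupp.single 1 (b + d 0)
            + Finsupp.single 2 (d 2)) from by
        apply finsupp3_ext <;> simp [Finsupp.single_apply] <;> omega]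
    rw [MvPolynomial.coeff_monomial_mul, one_mul]
  -- Stage 1 : all monomials have degree ≤ δ
  have stage1 : ∀ d ∈ p.support, d 0 + d 1 + d 2 ≤ (a+b+c)/2 := by
    by_contra hcon
    push_neg at hcon
    obtain ⟨d0, hd0mem, hd0big⟩ := hcon
    obtain ⟨d, hdT, hdmax⟩ := Finset.exists_max_image
      (p.support.filter (fun d => (a+b+c)/2 < d 0 + d 1 + d 2))
      (fun d => d 0 + d 1 + d 2)
      ⟨d0, Finset.mem_filter.mpr ⟨hd0mem, hd0big⟩⟩
    rw [Finset.mem_filter] at hdT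
    obtain ⟨hdmem, hdbig⟩ := hdT
    have hLcoeff : MvPolynomial.coeff (Finsupp.single (0:Fin 3) (N + d 1)
        + Finsupp.single 1 (N + d 0) + Finsupp.single 2 (d 2)) (CFM.Lpoly N p)
        = (-1:ℂ)^(d 2) * MvPolynomial.coeff d p := by
      rw [CFM.Lpoly, MvPolynomial.coeff_sum]
      rw [Finset.sum_eq_single_of_mem d hdmem]
      · exact coeff_Lterm_self N p d (by have := hbound d hdmem; omega)
          (by have := hbound d hdmem; omega)
      · intro d' hd' hne
        by_contra hno
        rcases coeff_Lterm_shape N p d d' (by have := hbound d' hd'; omega)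
          (by have := hbound d' hd'; omega) hno with he | hbig
        · exact hne he
        · have hmem2 : d' ∈ p.support.filter (fun d => (a+b+c)/2 < d 0 + d 1 + d 2) :=
            Finset.mem_filter.mpr ⟨hd', by omega⟩
          have := hdmax d' hmem2
          omega
    have hQcoeff : MvPolynomial.coeff (Finsupp.single (0:Fin 3) (a + d 1)
        + Finsupp.single 1 (b + d 0) + Finsupp.single 2 (d 2)) (CFM.Qpoly a b c) = 0 := by
      by_cases hmem : (Finsupp.single (0:Fin 3) (a + d 1)
          + Finsupp.single 1 (b + d 0) + Finsupp.single 2 (d 2)) ∈ (CFM.Qpoly a b c).support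
      · exfalso
        obtain ⟨hle, -⟩ := support_Qpoly a b c h1 h2 h3 h4 _ hmem
        simp only [Finsupp.add_apply, Finsupp.single_apply] at hle
        simp at hle
        omega
      · exact MvPolynomial.notMem_support_iff.mp hmem
    rw [hcoeff d, hQcoeff] at hLcoeff
    have hzero : MvPolynomial.coeff d p = 0 := by
      rcases mul_eq_zero.mp hLcoeff.symm with hz | hz
      · exact absurd hz (pow_ne_zero _ (by norm_num))
      · exact hz
    exact (MvPolynomial.mem_support_iff.mp hdmem) hzero
  -- Stage 2 : all monomials other than dstar have degree < δ
  have stage2 : ∀ d ∈ p.support, d ≠ dstar → d 0 + d 1 + d 2 < (a+b+c)/2 := by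
    intro d hdmem hdne
    rcases Nat.lt_or_ge (d 0 + d 1 + d 2) ((a+b+c)/2) with hlt | hge
    · exact hlt
    have hdeq : d 0 + d 1 + d 2 = (a+b+c)/2 := le_antisymm (stage1 d hdmem) hge
    exfalso
    have hLcoeff : MvPolynomial.coeff (Finsupp.single (0:Fin 3) (N + d 1)
        + Finsupp.single 1 (N + d 0) + Finsupp.single 2 (d 2)) (CFM.Lpoly N p)
        = (-1:ℂ)^(d 2) * MvPolynomial.coeff d p := by
      rw [CFM.Lpoly, MvPolynomial.coeff_sum]
      rw [Finset.sum_eq_single_of_mem d hdmem]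
      · exact coeff_Lterm_self N p d (by have := hbound d hdmem; omega)
          (by have := hbound d hdmem; omega)
      · intro d' hd' hne
        by_contra hno
        rcases coeff_Lterm_shape N p d d' (by have := hbound d' hd'; omega)
          (by have := hbound d' hd'; omega) hno with he | hbig
        · exact hne he
        · have := stage1 d' hd'
          omega
    have hQcoeff : MvPolynomial.coeff (Finsupp.single (0:Fin 3) (a + d 1)
        + Finsupp.single 1 (b + d 0) + Finsupp.single 2 (d 2)) (CFM.Qpoly a b c) = 0 := by
      by_cases hmem : (Finsupp.single (0:Fin 3) (a + d 1)
          + Finsupp.single 1 (b + d 0) + Finsupp.single 2 (d 2)) ∈ (CFM.Qpoly a b c).support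
      · exfalso
        obtain ⟨hle, heq⟩ := support_Qpoly a b c h1 h2 h3 h4 _ hmem
        have htop := heq (by
          simp only [Finsupp.add_apply, Finsupp.single_apply]
          simp
          omega)
        rw [topExp_def] at htop
        have hc0 := (single3_eq _ _ _ _ _ _).mp htop
        apply hdne
        apply finsupp3_ext
        · rw [hds0]; omega
        · rw [hds1]; omega
        · rw [hds2]; omega
      · exact MvPolynomial.notMem_support_iff.mp hmem
    rw [hcoeff d, hQcoeff] at hLcoeff
    have hzero : MvPolynomial.coeff d p = 0 := by
      rcases mul_eq_zero.mp hLcoeff.symm with hz | hz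
      · exact absurd hz (pow_ne_zero _ (by norm_num))
      · exact hz
    exact (MvPolynomial.mem_support_iff.mp hdmem) hzero
  -- Stage 3 : coefficient of dstar is 1
  have stage3 : MvPolynomial.coeff dstar p = 1 := by
    have hLd : MvPolynomial.coeff (Finsupp.single (0:Fin 3) (N + dstar 1)
        + Finsupp.single 1 (N + dstar 0) + Finsupp.single 2 (dstar 2)) (CFM.Lpoly N p)
        = (-1:ℂ)^(dstar 2) * MvPolynomial.coeff dstar p := by
      rw [CFM.Lpoly, MvPolynomial.coeff_sum]
      by_cases hmem : dstar ∈ p.support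
      · rw [Finset.sum_eq_single_of_mem dstar hmem]
        · exact coeff_Lterm_self N p dstar (by have := hbound dstar hmem; omega)
            (by have := hbound dstar hmem; omega)
        · intro d' hd' hne
          by_contra hno
          rcases coeff_Lterm_shape N p dstar d' (by have := hbound d' hd'; omega)
            (by have := hbound d' hd'; omega) hno with he | hbig
          · exact hne he
          · have := stage1 d' hd'
            rw [hds0, hds1, hds2] at hbig
            omega
      · rw [Finset.sum_eq_zero, MvPolynomial.notMem_support_iff.mp hmem, mul_zero]
        intro d' hd'
        by_contra hno
        rcases coeff_Lterm_shape N p dstar d' (by have := hbound d' hd'; omega)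
          (by have := hbound d' hd'; omega) hno with he | hbig
        · rw [he] at hd'; exact hmem hd'
        · have := stage1 d' hd'
          rw [hds0, hds1, hds2] at hbig
          omega
    have hQd : MvPolynomial.coeff (Finsupp.single (0:Fin 3) (a + dstar 1)
        + Finsupp.single 1 (b + dstar 0) + Finsupp.single 2 (dstar 2)) (CFM.Qpoly a b c)
        = (-1:ℂ)^((a+b-c)/2) := by
      rw [show (Finsupp.single (0:Fin 3) (a + dstar 1)
          + Finsupp.single 1 (b + dstar 0) + Finsupp.single 2 (dstar 2)) = topExp a b c from by
        rw [topExp_def]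
        apply finsupp3_ext <;> simp [Finsupp.single_apply, hds0, hds1, hds2] <;> try omega]
      exact coeff_top_Qpoly a b c h1 h2 h3 h4
    rw [hcoeff dstar, hQd] at hLd
    rw [hds2] at hLd
    have hne : ((-1:ℂ)^((a+b-c)/2)) ≠ 0 := pow_ne_zero _ (by norm_num)
    have := mul_left_cancel₀ hne (show (-1:ℂ)^((a+b-c)/2) * MvPolynomial.coeff dstar p
      = (-1:ℂ)^((a+b-c)/2) * 1 from by rw [mul_one]; exact hLd.symm)
    exact this
  refine ⟨?_, stage3, ?_⟩
  · apply le_antisymm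
    · rw [MvPolynomial.totalDegree]
      apply Finset.sup_le
      intro d hd
      rw [dsum_eq]
      exact stage1 d hd
    · have hmem : dstar ∈ p.support := MvPolynomial.mem_support_iff.mpr (by
        rw [stage3]; norm_num)
      have hle := MvPolynomial.le_totalDegree hmem
      rw [dsum_eq, hds0, hds1, hds2] at hle
      omega
  · intro d hd hne
    rw [dsum_eq]
    exact stage2 d hd hne


end
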